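/- Let E be an n-dimensional F₂-vector space arising as E = row(λ)/C as above, and for each factor i and each cyclically adjacent facet pair (F_{i,k}, F_{i,k+1}) define d_{i,k} ∈ E* by d_{i,k}([w]) = w(F_{i,k}) + w(F_{i,k+1}). Then: (a) d_{i,k} is well-defined (independent of the representative w modulo C); and (b) for every choice of one adjacent pair per factor, the resulting n functionals d_{1,k₁},...,d_{n,kₙ} form a basis of E*. -/

import Mathlib

noncomputable section

/-- Facets of the product of polygons `P_{m₁} × ⋯ × P_{mₙ}`. -/
abbrev PFacets (n : ℕ) (m : Fin n → ℕ) := (i : Fin n) × ZMod (m i)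

/-- The row space of `λ`: the span of its rows inside `F₂^{facets}`. -/
def rowSpace {n : ℕ} {m : Fin n → ℕ}
    (lam : (PFacets n m → ZMod 2) →ₗ[ZMod 2] (Fin (2 * n) → ZMod 2)) :
    Submodule (ZMod 2) (PFacets n m → ZMod 2) :=
  Submodule.span (ZMod 2)
    (Set.range fun r : Fin (2 * n) => fun p : PFacets n m =>
      lam (Pi.single p 1) r)

/-- The factor weight `χᵢ`. -/
def factorWeight {n : ℕ} (m : Fin n → ℕ) (i : Fin n) :
    PFacets n m → ZMod 2 :=
  fun p => if p.1 = i then 1 else 0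

/-- `C = span(χ₁,…,χₙ)`. -/
def weightSpan {n : ℕ} (m : Fin n → ℕ) :
    Submodule (ZMod 2) (PFacets n m → ZMod 2) :=
  Submodule.span (ZMod 2) (Set.range (factorWeight m))

/-- The vertex nonsingularity (characteristic) condition. -/
def IsCharacteristic {n : ℕ} {m : Fin n → ℕ}
    (lam : (PFacets n m → ZMod 2) →ₗ[ZMod 2] (Fin (2 * n) → ZMod 2)) : Prop :=
  ∀ j : (i : Fin n) → ZMod (m i),
    LinearIndependent (ZMod 2) (fun c : Fin n × Fin 2 =>
      lam (Pi.single ⟨c.1, j c.1 + (c.2.val : ZMod (m c.1))⟩ 1))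

/-- In the factor-compatible setting with
`E = row(λ)/C` of dimension `n`, the functionals
`d_{i,k}([w]) = w(F_{i,k}) + w(F_{i,k+1})` are:
(a) well defined — adding an element of `C = span(χ₁,…,χₙ)` to `w` does not
change the value `w(F_{i,k}) + w(F_{i,k+1})`; and
(b) for each choice of one adjacent pair `kᵢ` per factor, the functionals
`d_{1,k₁},…,d_{n,kₙ}` form a basis of `E*`; concretely, the linear map
`row(λ) → F₂^n`, `w ↦ (w(F_{i,kᵢ}) + w(F_{i,kᵢ+1}))ᵢ`, is surjective and
its kernel is exactly `C`. -/
theorem stmt18 (n : ℕ) (m : Fin n → ℕ) [∀ i, NeZero (m i)]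
    (hm : ∀ i, 3 ≤ m i)
    (lam : (PFacets n m → ZMod 2) →ₗ[ZMod 2] (Fin (2 * n) → ZMod 2))
    (hchar : IsCharacteristic lam)
    (hcompat : ∀ i, factorWeight m i ∈ rowSpace lam) :
    (∀ (i : Fin n) (k : ZMod (m i)) (w : PFacets n m → ZMod 2),
      ∀ c ∈ weightSpan m,
        (w + c) ⟨i, k⟩ + (w + c) ⟨i, k + 1⟩ = w ⟨i, k⟩ + w ⟨i, k + 1⟩) ∧
    (∀ k : (i : Fin n) → ZMod (m i),
      Function.Surjective (fun w : rowSpace lam => fun i : Fin n =>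
        (w : PFacets n m → ZMod 2) ⟨i, k i⟩ +
          (w : PFacets n m → ZMod 2) ⟨i, k i + 1⟩) ∧
      ∀ w ∈ rowSpace lam,
        ((∀ i : Fin n, w ⟨i, k i⟩ + w ⟨i, k i + 1⟩ = 0) ↔
          w ∈ weightSpan m)) := by
  classical
  -- elements of the weight span are constant on each block
  have hconst : ∀ c ∈ weightSpan m, ∀ (i : Fin n) (a b : ZMod (m i)),
      c ⟨i, a⟩ = c ⟨i, b⟩ := by
    intro c hc
    induction hc using Submodule.span_induction with
    | mem v hv =>
        obtain ⟨j, rfl⟩ := hv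
        intro i a b
        simp [factorWeight]
    | zero => intro i a b; simp
    | add u v _ _ hu hv => intro i a b; simp only [Pi.add_apply, hu i a b, hv i a b]
    | smul t v _ hv => intro i a b; simp only [Pi.smul_apply, hv i a b]
  have key2 : ∀ a b x : ZMod 2, (a + x) + (b + x) = a + b := by decide
  constructor
  · intro i k w c hc
    have h := hconst c hc i k (k + 1)
    simp only [Pi.add_apply]
    rw [h]
    exact key2 _ _ _
  · intro k
    -- the vertex vectors
    set g : Fin n × Fin 2 → (Fin (2 * n) → ZMod 2) := fun c =>
      lam (Pi.single ⟨c.1, k c.1 + (c.2.val : ZMod (m c.1))⟩ 1) with hg_def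
    have hg : LinearIndependent (ZMod 2) g := hchar k
    have hspan : Submodule.span (ZMod 2) (Set.range g) = ⊤ := by
      apply hg.span_eq_top_of_card_eq_finrank'
      simp [Module.finrank_pi, mul_comm]
    -- the rows
    set rows : Fin (2 * n) → (PFacets n m → ZMod 2) := fun r p =>
      lam (Pi.single p 1) r with hrows_def
    set L : (Fin (2 * n) → ZMod 2) →ₗ[ZMod 2] (PFacets n m → ZMod 2) :=
      Fintype.linearCombination (ZMod 2) rows with hL_def
    have hLrange : LinearMap.range L = rowSpace lam := by
      rw [hL_def, Fintype.range_linearCombination]; rfl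
    -- the restriction to the facets of the chosen vertex
    set P : (PFacets n m → ZMod 2) →ₗ[ZMod 2] (Fin n × Fin 2 → ZMod 2) :=
      LinearMap.pi (fun c : Fin n × Fin 2 =>
        LinearMap.proj (⟨c.1, k c.1 + (c.2.val : ZMod (m c.1))⟩ : PFacets n m)) with hP_def
    have hPapply : ∀ (v : PFacets n m → ZMod 2) (c : Fin n × Fin 2),
        P v c = v ⟨c.1, k c.1 + (c.2.val : ZMod (m c.1))⟩ := fun v c => rfl
    have hPL : ∀ (x : Fin (2 * n) → ZMod 2) (c : Fin n × Fin 2),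
        P (L x) c = ∑ r, x r * g c r := by
      intro x c
      rw [hPapply, hL_def, Fintype.linearCombination_apply]
      simp [Finset.sum_apply, hrows_def, hg_def, smul_eq_mul]
    -- injectivity of P ∘ L
    have hker : ∀ x : Fin (2 * n) → ZMod 2, P (L x) = 0 → x = 0 := by
      intro x hx
      set T : (Fin (2 * n) → ZMod 2) →ₗ[ZMod 2] ZMod 2 :=
        ∑ r, x r • LinearMap.proj r with hT_def
      have hTapply : ∀ u, T u = ∑ r, x r * u r := by
        intro u
        rw [hT_def]
        simp [LinearMap.sum_apply, smul_eq_mul]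
      have hTg : ∀ c, T (g c) = 0 := by
        intro c
        rw [hTapply, ← hPL]
        rw [hx]; rfl
      have hT0 : T = 0 := by
        rw [← LinearMap.ker_eq_top, ← top_le_iff, ← hspan, Submodule.span_le]
        rintro u ⟨c, rfl⟩
        exact hTg c
      funext r
      have := congrArg (fun f => f (Pi.single r 1)) hT0
      simp only [LinearMap.zero_apply] at this
      rw [hTapply] at this
      simpa [Pi.single_apply, mul_ite, Finset.sum_ite_eq'] using this
    have hinj : Function.Injective (P ∘ₗ L) := by
      rw [← LinearMap.ker_eq_bot, LinearMap.ker_eq_bot']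
      intro x hx
      exact hker x hx
    have hfr : Module.finrank (ZMod 2) (Fin (2 * n) → ZMod 2) =
        Module.finrank (ZMod 2) (Fin n × Fin 2 → ZMod 2) := by
      simp [Module.finrank_pi, mul_comm]
    have hsurjPL : Function.Surjective (P ∘ₗ L) :=
      (LinearMap.injective_iff_surjective_of_finrank_eq_finrank hfr).mp hinj
    -- key: an element of the row space vanishing on the vertex facets is zero
    have keyA : ∀ v ∈ rowSpace lam, P v = 0 → v = 0 := by
      intro v hv hPv
      rw [← hLrange] at hv
      obtain ⟨x, rfl⟩ := hv
      rw [hker x hPv, map_zero]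
    have hWR : weightSpan m ≤ rowSpace lam := by
      rw [weightSpan, Submodule.span_le]
      rintro u ⟨i, rfl⟩
      exact hcompat i
    have hval : ∀ (i : Fin n) (c : Fin 2),
        (⟨i, k i + (c.val : ZMod (m i))⟩ : PFacets n m) =
          if c = 0 then ⟨i, k i⟩ else ⟨i, k i + 1⟩ := by
      intro i c
      fin_cases c <;> simp
    constructor
    · -- surjectivity
      intro t
      obtain ⟨x, hx⟩ := hsurjPL (fun c => if c.2 = 1 then t c.1 else 0)
      refine ⟨⟨L x, hLrange ▸ LinearMap.mem_range_self L x⟩, ?_⟩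
      funext i
      have h0 := congrArg (fun f => f (i, 0)) hx
      have h1 := congrArg (fun f => f (i, 1)) hx
      simp only [LinearMap.comp_apply, hPapply, Fin.val_zero, Fin.val_one,
        Nat.cast_zero, Nat.cast_one, add_zero] at h0 h1
      rw [if_neg (by decide : ¬ (0 : Fin 2) = 1)] at h0
      rw [if_pos trivial] at h1
      show L x ⟨i, k i⟩ + L x ⟨i, k i + 1⟩ = t i
      rw [h0, h1, zero_add]
    · -- kernel
      intro w hw
      constructor
      · intro hz
        set a : Fin n → ZMod 2 := fun i => w ⟨i, k i⟩ with ha_def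
        set c : PFacets n m → ZMod 2 := ∑ i, a i • factorWeight m i with hc_def
        have hcmem : c ∈ weightSpan m := by
          apply Submodule.sum_mem
          intro i _
          exact Submodule.smul_mem _ _ (Submodule.subset_span ⟨i, rfl⟩)
        have hcval : ∀ (i : Fin n) (b : ZMod (m i)), c ⟨i, b⟩ = a i := by
          intro i b
          rw [hc_def]
          simp only [Finset.sum_apply, Pi.smul_apply, factorWeight, smul_eq_mul,
            mul_ite, mul_one, mul_zero]
          rw [Finset.sum_ite_eq Finset.univ i a]
          simp
        have hsum : w + c = 0 := by
          apply keyA _ (Submodule.add_mem _ hw (hWR hcmem))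
          funext q
          obtain ⟨i, cv⟩ := q
          rw [hPapply]
          have haa : ∀ u v : ZMod 2, u + v = 0 → v = u := by decide
          fin_cases cv
          · simp only [Fin.val_zero, Nat.cast_zero, add_zero, Pi.add_apply, Pi.zero_apply]
            rw [hcval i (k i)]
            exact CharTwo.add_self_eq_zero _
          · simp only [Fin.val_one, Nat.cast_one, Pi.add_apply, Pi.zero_apply]
            rw [hcval i (k i + 1), haa _ _ (hz i)]
            exact CharTwo.add_self_eq_zero _
        have : w = c := by
          funext p
          have h := congrArg (fun f => f p) hsum
          simp only [Pi.add_apply, Pi.zero_apply] at h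
          have haa : ∀ u v : ZMod 2, u + v = 0 → u = v := by decide
          exact haa _ _ h
        rw [this]; exact hcmem
      · intro hwc i
        have h := hconst w hwc i (k i) (k i + 1)
        rw [h]
        exact CharTwo.add_self_eq_zero _
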